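/- Let Y be a set, X ⊆ Y a nonempty subset, and δ a metric on X such that (X,δ) is a complete metric space. Let φ : X → ℝ be lower semicontinuous on (X,δ) and bounded below. Let F be a multivalued mapping from X to Y such that for each x ∈ X with x ∉ F(x) there exists z ∈ X with z ≠ x and δ(x,z) ≤ φ(x) − φ(z). Then F has a fixed point, i.e. there is x ∈ X with x ∈ F(x). -/
import Mathlib


open Metric Filter

/-- Auxiliary: in a nonempty complete metric space, with `φ` lower semicontinuous
and bounded below, there is a point `x` such that the only `z` with
`dist x z ≤ φ x - φ z` is `x` itself (a maximal point for the Caristi/Brøndsted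
order). -/
lemma exists_caristi_maximal {X : Type*} [MetricSpace X] [CompleteSpace X] [Nonempty X]
    (φ : X → ℝ) (hφ : LowerSemicontinuous φ) (hbdd : BddBelow (Set.range φ)) :
    ∃ x : X, ∀ z : X, dist x z ≤ φ x - φ z → z = x := by
  set S : X → Set X := fun x => {z | dist x z ≤ φ x - φ z} with hS
  have hself : ∀ x, x ∈ S x := by intro x; simp [hS]
  have hsub : ∀ x z, z ∈ S x → S z ⊆ S x := by
    intro x z hz w hw
    have := dist_triangle x z w
    simp only [hS, Set.mem_setOf_eq] at hz hw ⊢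
    linarith
  have hbddS : ∀ x, BddBelow (φ '' S x) :=
    fun x => hbdd.mono (Set.image_subset_range _ _)
  set m : X → ℝ := fun x => sInf (φ '' S x) with hm
  have hmle : ∀ x, ∀ z ∈ S x, m x ≤ φ z := by
    intro x z hz
    exact csInf_le (hbddS x) ⟨z, hz, rfl⟩
  -- step: choose a near-infimum successor
  have step : ∀ (x : X) (n : ℕ), ∃ z, z ∈ S x ∧ φ z ≤ m x + (1/2 : ℝ)^n := by
    intro x n
    have hne : (φ '' S x).Nonempty := ⟨φ x, x, hself x, rfl⟩
    have hlt : m x < m x + (1/2 : ℝ)^n := by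
      have : (0:ℝ) < (1/2:ℝ)^n := by positivity
      linarith
    obtain ⟨a, ⟨z, hz, rfl⟩, ha⟩ := exists_lt_of_csInf_lt hne hlt
    exact ⟨z, hz, le_of_lt ha⟩
  classical
  set u : ℕ → X := fun n => Nat.rec (Classical.arbitrary X)
    (fun n xn => (step xn n).choose) n with hu
  have hu0 : ∀ n, u (n+1) = (step (u n) n).choose := fun n => rfl
  have hstep : ∀ n, u (n+1) ∈ S (u n) ∧ φ (u (n+1)) ≤ m (u n) + (1/2:ℝ)^n := by
    intro n; rw [hu0]; exact (step (u n) n).choose_spec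
  -- chain property
  have hchain : ∀ n k, u (n + k) ∈ S (u n) := by
    intro n k
    induction k with
    | zero => exact hself (u n)
    | succ k ih =>
      exact hsub _ _ ih (hstep (n + k)).1
  have hchain' : ∀ n m', n ≤ m' → u m' ∈ S (u n) := by
    intro n m' hnm
    obtain ⟨k, rfl⟩ := Nat.exists_eq_add_of_le hnm
    exact hchain n k
  -- φ ∘ u is antitone and bounded below
  have hanti : Antitone (fun n => φ (u n)) := by
    apply antitone_nat_of_succ_le
    intro n
    have h := (hstep n).1
    simp only [hS, Set.mem_setOf_eq] at h
    have := dist_nonneg (x := u n) (y := u (n+1))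
    linarith
  have hbb : BddBelow (Set.range fun n => φ (u n)) :=
    hbdd.mono (Set.range_comp_subset_range _ _)
  set L : ℝ := ⨅ n, φ (u n) with hL
  have htend : Filter.Tendsto (fun n => φ (u n)) atTop (nhds L) :=
    tendsto_atTop_ciInf hanti hbb
  have hLle : ∀ n, L ≤ φ (u n) := fun n => ciInf_le hbb n
  -- Cauchy
  have hcauchy : CauchySeq u := by
    apply cauchySeq_of_le_tendsto_0 (fun n => φ (u n) - L)
    · intro n m' N hn hm
      rcases le_total n m' with h | h
      · have h1 := hchain' n m' h
        simp only [hS, Set.mem_setOf_eq] at h1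
        have := hanti hn
        have := hLle m'
        simp only at *
        linarith
      · have h1 := hchain' m' n h
        simp only [hS, Set.mem_setOf_eq] at h1
        rw [dist_comm]
        have := hanti hm
        have := hLle n
        simp only at *
        linarith
    · have : Filter.Tendsto (fun n => φ (u n) - L) atTop (nhds (L - L)) :=
        htend.sub tendsto_const_nhds
      simpa using this
  obtain ⟨xs, hxs⟩ := cauchySeq_tendsto_of_complete hcauchy
  -- φ xs ≤ L by lower semicontinuity
  have hφxs : φ xs ≤ L := by
    by_contra h
    push_neg at h
    obtain ⟨y, hy1, hy2⟩ := exists_between h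
    have hev1 : ∀ᶠ n in atTop, y < φ (u n) :=
      hxs.eventually (hφ xs y hy2)
    have hev2 : ∀ᶠ n in atTop, φ (u n) < y :=
      htend.eventually (gt_mem_nhds hy1)
    obtain ⟨n, h1, h2⟩ := (hev1.and hev2).exists
    linarith
  -- xs ∈ S (u n) for all n
  have hxsS : ∀ n, xs ∈ S (u n) := by
    intro n
    have hd : Filter.Tendsto (fun m' => dist (u n) (u m')) atTop (nhds (dist (u n) xs)) :=
      (continuous_const.dist continuous_id).continuousAt.tendsto.comp hxs
    have hr : Filter.Tendsto (fun m' => φ (u n) - φ (u m')) atTop (nhds (φ (u n) - L)) :=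
      tendsto_const_nhds.sub htend
    have hle : dist (u n) xs ≤ φ (u n) - L := by
      apply le_of_tendsto_of_tendsto hd hr
      filter_upwards [eventually_ge_atTop n] with m' h
      have h1 := hchain' n m' h
      simpa [hS] using h1
    simp only [hS, Set.mem_setOf_eq]
    linarith
  refine ⟨xs, fun z hz => ?_⟩
  have hzS : z ∈ S xs := hz
  have hzall : ∀ n, z ∈ S (u n) := fun n => hsub _ _ (hxsS n) hzS
  -- φ z ≥ L
  have hφz : L ≤ φ z := by
    have key : ∀ n, φ (u (n+1)) - (1/2:ℝ)^n ≤ φ z := by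
      intro n
      have h1 := (hstep n).2
      have h2 := hmle (u n) z (hzall n)
      linarith
    have ht : Filter.Tendsto (fun n => φ (u (n+1)) - (1/2:ℝ)^n) atTop (nhds (L - 0)) := by
      apply Filter.Tendsto.sub
      · exact htend.comp (tendsto_add_atTop_nat 1)
      · exact tendsto_pow_atTop_nhds_zero_of_lt_one (by norm_num) (by norm_num)
    have := le_of_tendsto ht (Filter.Eventually.of_forall key)
    simpa using this
  have : dist xs z ≤ 0 := by
    have := hz
    linarith
  have : dist xs z = 0 := le_antisymm this dist_nonneg
  exact (dist_eq_zero.mp this).symm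

theorem fixed_point_of_caristi_tool
    {Y : Type*} (X : Set Y) (hX : X.Nonempty)
    [MetricSpace X] [CompleteSpace X]
    (φ : X → ℝ) (hφ : LowerSemicontinuous φ) (hbdd : BddBelow (Set.range φ))
    (F : X → Set Y) (hFne : ∀ x, (F x).Nonempty)
    (hcond : ∀ x : X, (x : Y) ∉ F x → ∃ z : X, z ≠ x ∧ dist x z ≤ φ x - φ z) :
    ∃ x : X, (x : Y) ∈ F x := by
  have : Nonempty X := hX.to_subtype
  obtain ⟨x, hx⟩ := exists_caristi_maximal φ hφ hbdd
  refine ⟨x, ?_⟩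
  by_contra h
  obtain ⟨z, hz1, hz2⟩ := hcond x h
  exact hz1 (hx z hz2)
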